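/- Let Y be a topological space and consider Z = Y × [0,1] with the subset A = univ ×ˢ {0} (that is, A = Y × {0}). Then for every y ∈ Y, the fiber {γ ∈ Holink(Z, A) | γ(0) = (y, 0)} of the evaluation map, with the subspace topology, is a contractible space. -/

import Mathlib

open Set unitInterval

/-- The homotopy link of a subset `A` of a topological space `Z`: the set of continuous
paths `γ : [0,1] → Z` with `γ 0 ∈ A` and `γ t ∉ A` for all `t ≠ 0`. -/
def Holink {Z : Type*} [TopologicalSpace Z] (A : Set Z) : Set C(unitInterval, Z) :=
  {γ | γ 0 ∈ A ∧ ∀ t : unitInterval, t ≠ 0 → γ t ∉ A}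

namespace HolinkAux

instance : ContinuousMul unitInterval :=
  ⟨by
    apply continuous_induced_rng.2
    show Continuous fun p : I × I => (p.1 : ℝ) * (p.2 : ℝ)
    fun_prop⟩

lemma max_eq_zero_iff {a b : I} : max a b = 0 ↔ a = 0 ∧ b = 0 := by
  constructor
  · intro h
    exact ⟨le_antisymm (h ▸ le_max_left a b) nonneg', le_antisymm (h ▸ le_max_right a b) nonneg'⟩
  · rintro ⟨rfl, rfl⟩; simp

lemma mem_A_iff {Y : Type} (z : Y × I) :
    z ∈ ((univ : Set Y) ×ˢ ({0} : Set unitInterval)) ↔ z.2 = 0 := by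
  rw [Set.mem_prod]
  simp

end HolinkAux

/-- For the collared pair `(Y × [0,1], Y × {0})`, each fiber of the evaluation map on
the homotopy link is contractible. -/
theorem holink_collar_fiber_contractible
    {Y : Type} [TopologicalSpace Y] (y : Y) :
    ContractibleSpace
      {γ : Holink ((univ : Set Y) ×ˢ ({0} : Set unitInterval)) //
        γ.1 0 = (y, (0 : unitInterval))} := by
  open HolinkAux in
  set A : Set (Y × I) := (univ : Set Y) ×ˢ ({0} : Set unitInterval) with hA
  let X := {γ : Holink A // γ.1 0 = (y, (0 : unitInterval))}
  show ContractibleSpace X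
  -- the canonical path t ↦ (y, t)
  have hcmem : (⟨fun t => (y, t), by fun_prop⟩ : C(I, Y × I)) ∈ Holink A := by
    constructor
    · simp [hA, mem_A_iff]
    · intro t ht
      rw [hA, mem_A_iff]
      exact ht
  let c : X := ⟨⟨⟨fun t => (y, t), by fun_prop⟩, hcmem⟩, rfl⟩
  -- the big homotopy, as an uncurried continuous map
  let F : C((I × X) × I, Y × I) :=
    { toFun := fun q =>
        ((q.1.2.1.1 (σ q.1.1 * q.2)).1,
          max (q.1.2.1.1 (σ q.1.1 * q.2)).2 (q.1.1 * q.2))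
      continuous_toFun := by
        have h1 : Continuous fun q : (I × X) × I => (q.1.2.1.1 : C(I, Y × I)) :=
          continuous_subtype_val.comp (continuous_subtype_val.comp
            (continuous_snd.comp continuous_fst))
        have h2 : Continuous fun q : (I × X) × I => σ q.1.1 * q.2 :=
          (continuous_symm.comp (continuous_fst.comp continuous_fst)).mul continuous_snd
        have hg : Continuous fun q : (I × X) × I => q.1.2.1.1 (σ q.1.1 * q.2) :=
          ContinuousEval.continuous_eval.comp (h1.prodMk h2)
        have h3 : Continuous fun q : (I × X) × I => q.1.1 * q.2 :=
          (continuous_fst.comp continuous_fst).mul continuous_snd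
        exact (continuous_fst.comp hg).prodMk ((continuous_snd.comp hg).max h3) }
  -- membership of each time slice
  have hmem : ∀ p : I × X, (F.curry p : C(I, Y × I)) ∈ Holink A := by
    intro ⟨s, x⟩
    obtain ⟨⟨γ, hγ⟩, hx⟩ := x
    constructor
    · show ((γ (σ s * 0)).1, max (γ (σ s * 0)).2 (s * 0)) ∈ A
      rw [mem_A_iff]
      simp [mul_zero, hx]
    · intro t ht
      show ((γ (σ s * t)).1, max (γ (σ s * t)).2 (s * t)) ∉ A
      rw [hA, mem_A_iff]
      intro h
      replace h : max (γ (σ s * t)).2 (s * t) = 0 := h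
      rw [max_eq_zero_iff] at h
      rcases eq_or_ne s 0 with rfl | hs
      · refine hγ.2 (σ 0 * t) (by rw [symm_zero, one_mul]; exact ht) ?_
        rw [hA, mem_A_iff]
        exact h.1
      · rcases mul_eq_zero.1 h.2 with h' | h'
        · exact hs h'
        · exact ht h'
  have hst : ∀ p : I × X, (F.curry p : C(I, Y × I)) 0 = (y, (0 : unitInterval)) := by
    intro ⟨s, x⟩
    obtain ⟨⟨γ, hγ⟩, hx⟩ := x
    show ((γ (σ s * 0)).1, max (γ (σ s * 0)).2 (s * 0)) = (y, 0)
    simp [mul_zero, hx]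
  let H : C(I × X, X) :=
    { toFun := fun p => ⟨⟨F.curry p, hmem p⟩, hst p⟩
      continuous_toFun := (F.curry.continuous.subtype_mk hmem).subtype_mk hst }
  rw [contractible_iff_id_nullhomotopic]
  refine ⟨c, ⟨{ toContinuousMap := H, map_zero_left := ?_, map_one_left := ?_ }⟩⟩
  · intro x
    obtain ⟨⟨γ, hγ⟩, hx⟩ := x
    apply Subtype.ext; apply Subtype.ext
    refine ContinuousMap.ext fun t => ?_
    show ((γ (σ 0 * t)).1, max (γ (σ 0 * t)).2 ((0:I) * t)) = γ t
    rw [symm_zero, one_mul, zero_mul, max_eq_left nonneg']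
  · intro x
    obtain ⟨⟨γ, hγ⟩, hx⟩ := x
    apply Subtype.ext; apply Subtype.ext
    refine ContinuousMap.ext fun t => ?_
    show ((γ (σ 1 * t)).1, max (γ (σ 1 * t)).2 ((1:I) * t)) = (y, t)
    rw [symm_one, zero_mul, one_mul, hx]
    simp [max_eq_right nonneg']
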